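/- Let E be a real inner product space of finite dimension n ≥ 3 with orthonormal basis (e₁,…,eₙ), let h and r be symmetric bilinear forms on E, and let λ ∈ ℝ. If (1/2)h + (1/(n−2))r = ((n−1)λ/(n−2))·g and Σᵢ h(eᵢ,eᵢ) = 0, then |r|² ≥ n(n−1)²λ². -/

import Mathlib

open RealInnerProductSpace

/-- The inner product of a real inner product space, viewed as a symmetric
bilinear form `g(X,Y) = ⟪X,Y⟫`. -/
noncomputable def gip {E : Type*} [NormedAddCommGroup E] [InnerProductSpace ℝ E] :
    E → E → ℝ := fun x y => ⟪x, y⟫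

/-- The Kulkarni–Nomizu product of two bilinear forms. -/
def kn {E : Type*} (T₁ T₂ : E → E → ℝ) : E → E → E → E → ℝ :=
  fun X Y Z W =>
    T₁ X W * T₂ Y Z + T₁ Y Z * T₂ X W - T₁ X Z * T₂ Y W - T₁ Y W * T₂ X Z

theorem stmt_6 {E : Type*} [NormedAddCommGroup E] [InnerProductSpace ℝ E]
    {n : ℕ} (hn : 3 ≤ n) (e : OrthonormalBasis (Fin n) ℝ E)
    (h : E →ₗ[ℝ] E →ₗ[ℝ] ℝ) (hsymm : ∀ X Y : E, h X Y = h Y X)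
    (r : E →ₗ[ℝ] E →ₗ[ℝ] ℝ) (rsymm : ∀ X Y : E, r X Y = r Y X) (lam : ℝ)
    (hsol : ∀ Y Z : E, (1 / 2) * h Y Z + (1 / ((n : ℝ) - 2)) * r Y Z
      = (((n : ℝ) - 1) * lam / ((n : ℝ) - 2)) * ⟪Y, Z⟫)
    (htr : ∑ i, h (e i) (e i) = 0) :
    ∑ i, ∑ j, (r (e i) (e j)) ^ 2 ≥ (n : ℝ) * ((n : ℝ) - 1) ^ 2 * lam ^ 2 := by
  have hne : (n:ℝ) - 2 ≠ 0 := by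
    have : (3:ℝ) ≤ n := by exact_mod_cast hn
    linarith
  have hnpos : (0:ℝ) < n := by
    have : (3:ℝ) ≤ n := by exact_mod_cast hn
    linarith
  -- trace of r
  have htrr : ∑ i, r (e i) (e i) = (n : ℝ) * ((n:ℝ) - 1) * lam := by
    have hsum : ∑ i, ((1 / 2) * h (e i) (e i) + (1 / ((n : ℝ) - 2)) * r (e i) (e i))
        = ∑ i : Fin n, (((n : ℝ) - 1) * lam / ((n : ℝ) - 2)) * ⟪e i, e i⟫ := by
      exact Finset.sum_congr rfl (fun i _ => hsol (e i) (e i))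
    have hone : ∀ i : Fin n, (⟪e i, e i⟫ : ℝ) = 1 := fun i => by
      simpa using orthonormal_iff_ite.mp e.orthonormal i i
    rw [Finset.sum_add_distrib, ← Finset.mul_sum, ← Finset.mul_sum, htr, mul_zero, zero_add]
      at hsum
    simp only [hone] at hsum
    simp only [Finset.sum_const, Finset.card_univ, Fintype.card_fin, nsmul_eq_mul, mul_one]
      at hsum
    field_simp at hsum
    linarith [hsum]
  -- Cauchy-Schwarz: (∑ aᵢ)² ≤ n ∑ aᵢ²
  have hcs : (∑ i, r (e i) (e i)) ^ 2 ≤ (n : ℝ) * ∑ i, (r (e i) (e i)) ^ 2 := by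
    have := sq_sum_le_card_mul_sum_sq (s := (Finset.univ : Finset (Fin n)))
      (f := fun i => r (e i) (e i))
    simpa using this
  have hdiag : ∑ i, (r (e i) (e i)) ^ 2 ≤ ∑ i, ∑ j, (r (e i) (e j)) ^ 2 := by
    apply Finset.sum_le_sum
    intro i _
    have := Finset.single_le_sum (f := fun j => (r (e i) (e j)) ^ 2)
      (fun j _ => sq_nonneg _) (Finset.mem_univ i)
    simpa using this
  have key : ((n : ℝ) * ((n:ℝ) - 1) * lam) ^ 2 ≤ (n : ℝ) * ∑ i, ∑ j, (r (e i) (e j)) ^ 2 := by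
    calc ((n : ℝ) * ((n:ℝ) - 1) * lam) ^ 2 = (∑ i, r (e i) (e i)) ^ 2 := by rw [htrr]
      _ ≤ (n : ℝ) * ∑ i, (r (e i) (e i)) ^ 2 := hcs
      _ ≤ (n : ℝ) * ∑ i, ∑ j, (r (e i) (e j)) ^ 2 := by
          exact mul_le_mul_of_nonneg_left hdiag (le_of_lt hnpos)
  rw [ge_iff_le, ← mul_le_mul_iff_of_pos_left hnpos]
  calc (n:ℝ) * ((n:ℝ) * ((n:ℝ)-1)^2 * lam^2) = ((n : ℝ) * ((n:ℝ) - 1) * lam) ^ 2 := by ring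
    _ ≤ _ := key
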